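/- Consider the Filippov sliding vector field f^S(x) = (f^L₁(x) f^R(x) − f^R₁(x) f^L(x)) / (f^L₁(x) − f^R₁(x)) for the truncated Filippov system with f^L(x) = A x + bμ and f^R(x) = c constant. Let qᵀ = e₁ᵀ adj(A) and s = qᵀ b μ. Suppose s > 0, qᵀ c > 0, and c₁ ≠ 0. Then for any x with x₁ = 0 and f^L₁(x) c₁ ≤ 0, the denominator f^L₁(x) − c₁ is nonzero and qᵀ f^S(x) ≥ min(s, qᵀ c) > 0. -/

import Mathlib

open Matrix

/-- Estimate for the Filippov sliding vector field of the truncated system: on the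
switching manifold, away from crossing regions, `qᵀ f^S(x) ≥ min(s, qᵀ c) > 0`. -/
theorem sliding_vector_field_estimate (n : ℕ) (A : Matrix (Fin (n+1)) (Fin (n+1)) ℝ)
    (b c : Fin (n+1) → ℝ) (μ : ℝ)
    (fL : (Fin (n+1) → ℝ) → (Fin (n+1) → ℝ)) (hfL : ∀ x, fL x = A.mulVec x + μ • b)
    (fS : (Fin (n+1) → ℝ) → (Fin (n+1) → ℝ))
    (hfS : ∀ x, fS x = (fL x 0 - c 0)⁻¹ • ((fL x 0) • c - (c 0) • fL x))
    (q : Fin (n+1) → ℝ) (hq : q = (adjugate A) 0)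
    (s : ℝ) (hs : s = (q ⬝ᵥ b) * μ)
    (hspos : 0 < s) (hqc : 0 < q ⬝ᵥ c) (hc1 : c 0 ≠ 0)
    (x : Fin (n+1) → ℝ) (hx : x 0 = 0) (hcross : fL x 0 * c 0 ≤ 0) :
    fL x 0 - c 0 ≠ 0 ∧ min s (q ⬝ᵥ c) ≤ q ⬝ᵥ fS x ∧ 0 < min s (q ⬝ᵥ c) := by
  -- q ⬝ᵥ fL x = s
  have hqfL : q ⬝ᵥ fL x = s := by
    rw [hfL, hs, hq]
    have h1 : adjugate A 0 ⬝ᵥ A.mulVec x = (A.det • (1 : Matrix (Fin (n+1)) (Fin (n+1)) ℝ)) 0 ⬝ᵥ x := by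
      rw [← adjugate_mul A]
      simp [dotProduct, mulVec, mul_apply, Finset.mul_sum, Finset.sum_mul, mul_assoc]
      rw [Finset.sum_comm]
    rw [dotProduct_add, h1]
    simp [dotProduct, one_apply, hx, mul_comm]
    rw [Finset.mul_sum]
    exact Finset.sum_congr rfl fun i _ => by ring
  set u := fL x 0 with hu
  set Q := q ⬝ᵥ c with hQ
  have hqfS : q ⬝ᵥ fS x = (u - c 0)⁻¹ * (u * Q - c 0 * s) := by
    rw [hfS]
    simp only [dotProduct_smul, dotProduct_sub, smul_eq_mul, hqfL]
    rfl
  set m := min s Q with hm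
  have hmpos : 0 < m := lt_min hspos hqc
  have hms : m ≤ s := min_le_left _ _
  have hmQ : m ≤ Q := min_le_right _ _
  rcases lt_or_gt_of_ne hc1 with hneg | hpos
  · -- c 0 < 0, so u ≥ 0, u - c 0 > 0
    have hu0 : 0 ≤ u := by nlinarith
    have hd : 0 < u - c 0 := by linarith
    refine ⟨ne_of_gt hd, ?_, hmpos⟩
    rw [hqfS]
    rw [inv_mul_eq_div, le_div_iff₀ hd]
    nlinarith
  · -- c 0 > 0, so u ≤ 0, u - c 0 < 0
    have hu0 : u ≤ 0 := by nlinarith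
    have hd : u - c 0 < 0 := by linarith
    refine ⟨ne_of_lt hd, ?_, hmpos⟩
    rw [hqfS, inv_mul_eq_div, le_div_iff_of_neg hd]
    nlinarith
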